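/- If n = 2^{n₀}·(1 + 2^{n₁}·(1 + 2^{n₂}·(⋯ 2^{n_{k−1}}·(1 + 2^{n_k})⋯))) with n₀ ≥ 0 and n_i > 0 for 1 ≤ i ≤ k, then a(n) equals the finite continued fraction n₀ + 1/(n₁ + 1/(n₂ + ⋯ + 1/(n_{k−1} + 1/(1 + n_k))⋯)). -/

import Mathlib

/-- Value of the finite continued fraction n₀ + 1/(n₁ + 1/(⋯ + 1/(1 + n_k)⋯)). -/
def cfVal : List ℕ → ℚ
  | [] => 0
  | [n] => 1 + (n : ℚ)
  | n :: l => (n : ℚ) + 1 / cfVal l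

/-- The index 2^{n₀}·(1 + 2^{n₁}·(1 + ⋯ 2^{n_{k−1}}·(1 + 2^{n_k})⋯)). -/
def cfIdx : List ℕ → ℕ
  | [] => 1
  | [n] => 2 ^ n
  | n :: l => 2 ^ n * (1 + cfIdx l)

lemma cfIdx_pos : ∀ l : List ℕ, 1 ≤ cfIdx l := by
  intro l
  cases l with
  | nil => simp [cfIdx]
  | cons n l =>
    cases l with
    | nil => simpa [cfIdx] using Nat.one_le_two_pow
    | cons m l' =>
      simp only [cfIdx]
      exact Nat.one_le_iff_ne_zero.mpr (by positivity)

lemma cfIdx_even (m : ℕ) (l : List ℕ) (hm : 0 < m) : 2 ∣ cfIdx (m :: l) := by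
  have h2 : 2 ∣ 2 ^ m := dvd_pow_self 2 hm.ne'
  cases l with
  | nil => simpa [cfIdx] using h2
  | cons k l' => exact Dvd.dvd.mul_right h2 _

theorem stmt12 (a : ℕ → ℚ) (h1 : a 1 = 1)
    (h2 : ∀ n : ℕ, 1 ≤ n → a (2 * n) = a n + 1)
    (h3 : ∀ n : ℕ, 1 ≤ n → a (2 * n + 1) = 1 / a (2 * n)) :
    ∀ ns : List ℕ, ns ≠ [] → (∀ i ∈ ns.tail, 0 < i) →
      a (cfIdx ns) = cfVal ns := by
  have pow : ∀ (n m : ℕ), 1 ≤ m → a (2 ^ n * m) = a m + n := by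
    intro n
    induction n with
    | zero => intro m hm; simp
    | succ n ih =>
      intro m hm
      have e : 2 ^ (n + 1) * m = 2 * (2 ^ n * m) := by ring
      rw [e, h2 _ (Nat.one_le_iff_ne_zero.mpr (by positivity)), ih m hm]
      push_cast; ring
  intro ns
  induction ns with
  | nil => intro h; exact absurd rfl h
  | cons n l ih =>
    intro _ htail
    cases l with
    | nil =>
      simp only [cfIdx, cfVal]
      rw [show (2:ℕ) ^ n = 2 ^ n * 1 by ring, pow n 1 le_rfl, h1]
    | cons m l' =>
      have hm : 0 < m := htail m List.mem_cons_self
      have hrec : a (cfIdx (m :: l')) = cfVal (m :: l') :=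
        ih (by simp) (fun i hi => htail i (List.mem_cons_of_mem m hi))
      obtain ⟨k, hk⟩ := cfIdx_even m l' hm
      have hk1 : 1 ≤ k := by
        rcases Nat.eq_zero_or_pos k with h | h
        · exfalso; have := cfIdx_pos (m :: l'); omega
        · exact h
      have e : cfIdx (n :: m :: l') = 2 ^ n * (2 * k + 1) := by
        simp only [cfIdx]; rw [hk]; ring
      rw [e, pow n (2 * k + 1) (by omega), h3 k hk1, ← hk, hrec]
      show _ = (n : ℚ) + 1 / cfVal (m :: l')
      ring
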